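/- Let A be a unital ring and let C_n → C_{n−1} → ⋯ → C_1 → C_0 be a chain complex of finitely generated free A-modules (boundary maps ∂_i : C_i → C_{i−1} with ∂_i ∘ ∂_{i+1} = 0, and the conventions ∂_0 = 0, ∂_{n+1} = 0). Assume each homology module H_i = ker ∂_i / range ∂_{i+1} is a finitely generated free A-module. Then for every i, the module of cycles Z_i = ker ∂_i and the module of boundaries B_i = range ∂_{i+1} are stably free A-modules. -/

import Mathlib

/-- An `A`-module `M` is *stably free* if `M ⊕ A^s ≅ A^t` for some natural numbers `s, t`. -/
def IsStablyFree (A : Type*) [Ring A] (M : Type*) [AddCommGroup M] [Module A M] : Prop :=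
  ∃ s t : ℕ, Nonempty ((M × (Fin s → A)) ≃ₗ[A] (Fin t → A))

section Helpers

variable {A : Type*} [Ring A]

/-- `A^s × A^t ≅ A^(s+t)`. -/
noncomputable def finPowProdEquiv (A : Type*) [Ring A] (s t : ℕ) :
    ((Fin s → A) × (Fin t → A)) ≃ₗ[A] (Fin (s + t) → A) :=
  (LinearEquiv.sumArrowLequivProdArrow (Fin s) (Fin t) A A).symm ≪≫ₗ
    LinearEquiv.funCongrLeft A A finSumFinEquiv.symm

theorem isStablyFree_of_equiv {M N : Type*} [AddCommGroup M] [Module A M]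
    [AddCommGroup N] [Module A N] (e : M ≃ₗ[A] N) (h : IsStablyFree A N) :
    IsStablyFree A M := by
  obtain ⟨s, t, ⟨f⟩⟩ := h
  exact ⟨s, t, ⟨(e.prodCongr (LinearEquiv.refl A _)).trans f⟩⟩

theorem isStablyFree_of_free_finite (M : Type*) [AddCommGroup M] [Module A M]
    [Module.Free A M] [Module.Finite A M] : IsStablyFree A M := by
  refine ⟨0, Fintype.card (Module.Free.ChooseBasisIndex A M), ⟨?_⟩⟩
  have e1 : M ≃ₗ[A] (Fin (Fintype.card (Module.Free.ChooseBasisIndex A M)) → A) :=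
    (Module.Free.chooseBasis A M).equivFun ≪≫ₗ
      LinearEquiv.funCongrLeft A A (Fintype.equivFin _).symm
  have e0 : (M × (Fin 0 → A)) ≃ₗ[A] M :=
    LinearEquiv.ofLinear (LinearMap.fst A M (Fin 0 → A))
      (LinearMap.prod LinearMap.id 0)
      (LinearMap.ext fun x => rfl)
      (LinearMap.ext fun x => Prod.ext rfl (Subsingleton.elim _ _))
  exact e0 ≪≫ₗ e1

theorem Module.Projective.of_isStablyFree {M : Type*} [AddCommGroup M] [Module A M]
    (h : _root_.IsStablyFree A M) : Module.Projective A M := by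
  obtain ⟨s, t, ⟨f⟩⟩ := h
  refine Module.Projective.of_split (M := Fin t → A)
    (f.toLinearMap.comp (LinearMap.inl A M (Fin s → A)))
    ((LinearMap.fst A M (Fin s → A)).comp f.symm.toLinearMap) ?_
  ext x
  simp

/-- Cancellation: if `M ≅ K × Q` with `M` and `Q` stably free, then `K` is stably free. -/
theorem isStablyFree_cancel {M K Q : Type*} [AddCommGroup M] [Module A M]
    [AddCommGroup K] [Module A K] [AddCommGroup Q] [Module A Q]
    (e : M ≃ₗ[A] K × Q) (hM : IsStablyFree A M) (hQ : IsStablyFree A Q) :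
    IsStablyFree A K := by
  obtain ⟨s, t, ⟨f⟩⟩ := hM
  obtain ⟨u, v, ⟨g⟩⟩ := hQ
  refine ⟨v + s, t + u, ⟨?_⟩⟩
  exact ((LinearEquiv.refl A K).prodCongr (finPowProdEquiv A v s).symm) ≪≫ₗ
    ((LinearEquiv.refl A K).prodCongr (g.symm.prodCongr (LinearEquiv.refl A (Fin s → A)))) ≪≫ₗ
    ((LinearEquiv.refl A K).prodCongr (LinearEquiv.prodAssoc A Q (Fin u → A) (Fin s → A))) ≪≫ₗ
    (LinearEquiv.prodAssoc A K Q ((Fin u → A) × (Fin s → A))).symm ≪≫ₗ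
    ((LinearEquiv.refl A (K × Q)).prodCongr (LinearEquiv.prodComm A (Fin u → A) (Fin s → A))) ≪≫ₗ
    (LinearEquiv.prodAssoc A (K × Q) (Fin s → A) (Fin u → A)).symm ≪≫ₗ
    ((e.symm.prodCongr (LinearEquiv.refl A (Fin s → A))).prodCongr (LinearEquiv.refl A (Fin u → A))) ≪≫ₗ
    (f.prodCongr (LinearEquiv.refl A (Fin u → A))) ≪≫ₗ
    finPowProdEquiv A t u

/-- If `M ⧸ Q` is projective then `M ≅ Q × M ⧸ Q`. -/
theorem nonempty_equiv_prod_quotient {M : Type*} [AddCommGroup M] [Module A M]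
    (Q : Submodule A M) [Module.Projective A (M ⧸ Q)] :
    Nonempty (M ≃ₗ[A] Q × (M ⧸ Q)) := by
  obtain ⟨l, hl⟩ := Module.projective_lifting_property Q.mkQ LinearMap.id
    (Submodule.mkQ_surjective Q)
  have hl' : ∀ y, Q.mkQ (l y) = y := fun y => LinearMap.congr_fun hl y
  have hmem : ∀ x : M, x - l (Q.mkQ x) ∈ Q := by
    intro x
    rw [← Submodule.Quotient.mk_eq_zero, ← Submodule.mkQ_apply, map_sub, hl', sub_self]
  refine ⟨LinearEquiv.ofLinear
    ((LinearMap.codRestrict Q (LinearMap.id - l ∘ₗ Q.mkQ) hmem).prod Q.mkQ)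
    (Q.subtype ∘ₗ LinearMap.fst A Q (M ⧸ Q) + l ∘ₗ LinearMap.snd A Q (M ⧸ Q)) ?_ ?_⟩
  · apply LinearMap.ext
    rintro ⟨q, y⟩
    refine Prod.ext (Subtype.ext ?_) ?_
    · simp [hl', q.2, (Submodule.Quotient.mk_eq_zero Q).mpr q.2]
    · have h0 : Q.mkQ (q : M) = 0 := (Submodule.Quotient.mk_eq_zero Q).mpr q.2
      simp [h0, ← Submodule.mkQ_apply, hl']
  · apply LinearMap.ext
    intro x
    simp

end Helpers

/-- Let `C_n → ⋯ → C_0` be a chain complex of finitely generated free `A`-modules (we encode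
it by modules `C i` for all `i : ℕ`, trivial above degree `n`, with boundary maps
`d i : C (i+1) → C i`, so that `∂_{i+1} = d i`; the conventions `∂_0 = 0`, `∂_{n+1} = 0` are
automatic).  If every homology module (`H_0 = C_0 / range ∂_1` and
`H_{i+1} = ker ∂_{i+1} / range ∂_{i+2}`) is finitely generated free, then all the cycle
modules `Z_i = ker ∂_i` (here `Z_0 = C_0` and `Z_{i+1} = ker (d i)`) and boundary modules
`B_i = range ∂_{i+1} = range (d i)` are stably free. -/
theorem cycles_and_boundaries_stablyFree {A : Type*} [Ring A] (n : ℕ) (C : ℕ → Type*)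
    [∀ i, AddCommGroup (C i)] [∀ i, Module A (C i)]
    [∀ i, Module.Free A (C i)] [∀ i, Module.Finite A (C i)]
    (hbound : ∀ i, n < i → Subsingleton (C i))
    (d : ∀ i : ℕ, C (i + 1) →ₗ[A] C i)
    (hdd : ∀ i, (d i) ∘ₗ (d (i + 1)) = 0)
    (hH0free : Module.Free A (C 0 ⧸ LinearMap.range (d 0)))
    (hH0fin : Module.Finite A (C 0 ⧸ LinearMap.range (d 0)))
    (hHfree : ∀ i, Module.Free A
      (↥(LinearMap.ker (d i)) ⧸
        (LinearMap.range (d (i + 1))).comap (LinearMap.ker (d i)).subtype))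
    (hHfin : ∀ i, Module.Finite A
      (↥(LinearMap.ker (d i)) ⧸
        (LinearMap.range (d (i + 1))).comap (LinearMap.ker (d i)).subtype)) :
    IsStablyFree A (C 0) ∧
    (∀ i, IsStablyFree A ↥(LinearMap.ker (d i))) ∧
    (∀ i, IsStablyFree A ↥(LinearMap.range (d i))) := by
  have hC : ∀ i, IsStablyFree A (C i) := fun i => isStablyFree_of_free_finite (C i)
  -- B₀ is stably free
  have hB0 : IsStablyFree A ↥(LinearMap.range (d 0)) := by
    haveI := hH0free
    haveI := hH0fin
    obtain ⟨e⟩ := nonempty_equiv_prod_quotient (LinearMap.range (d 0))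
    exact isStablyFree_cancel e (hC 0) (isStablyFree_of_free_finite _)
  -- inductive step: Bᵢ stably free → Z_{i+1} stably free, and then B_{i+1} stably free
  have hker : ∀ i, IsStablyFree A ↥(LinearMap.range (d i)) →
      IsStablyFree A ↥(LinearMap.ker (d i)) := by
    intro i hB
    have hquot : IsStablyFree A (C (i + 1) ⧸ LinearMap.ker (d i)) :=
      isStablyFree_of_equiv ((d i).quotKerEquivRange) hB
    haveI : Module.Projective A (C (i + 1) ⧸ LinearMap.ker (d i)) :=
      Module.Projective.of_isStablyFree hquot
    obtain ⟨e⟩ := nonempty_equiv_prod_quotient (LinearMap.ker (d i))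
    exact isStablyFree_cancel e (hC (i + 1)) hquot
  have hstep : ∀ i, IsStablyFree A ↥(LinearMap.ker (d i)) →
      IsStablyFree A ↥(LinearMap.range (d (i + 1))) := by
    intro i hZ
    haveI := hHfree i
    haveI := hHfin i
    obtain ⟨e⟩ := nonempty_equiv_prod_quotient
      ((LinearMap.range (d (i + 1))).comap (LinearMap.ker (d i)).subtype)
    have hN : IsStablyFree A
        ↥((LinearMap.range (d (i + 1))).comap (LinearMap.ker (d i)).subtype) :=
      isStablyFree_cancel e hZ (isStablyFree_of_free_finite _)
    have hle : LinearMap.range (d (i + 1)) ≤ LinearMap.ker (d i) :=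
      LinearMap.range_le_ker_iff.mpr (hdd i)
    exact isStablyFree_of_equiv (Submodule.comapSubtypeEquivOfLe hle).symm hN
  have hB : ∀ i, IsStablyFree A ↥(LinearMap.range (d i)) := by
    intro i
    induction i with
    | zero => exact hB0
    | succ j ih => exact hstep j (hker j ih)
  exact ⟨hC 0, fun i => hker i (hB i), hB⟩
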